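/- There exists a finite set S ⊂ ℂ containing 0 such that for every λ ∉ S, every (a,b,c,p) ∈ ℂ⁴ with c ≠ 0 satisfying λp² = −2a, λ²b = 4ac, 12ca³ = (2c³+1)λ, and 64c⁶ − (16λ⁶ − 32)c³ + λ⁶ = 0, every g ∈ G, and every σ ∈ H: if g·(σ·W(a,b,c,p)) = W(a,b,c,p), then g·W(a,b,c,p) = W(a,b,c,p) and σ·W(a,b,c,p) = W(a,b,c,p). -/

import Mathlib

noncomputable section

/-- The first cubic form defining the (3,3) pencil `X_λ`. -/
def Fcubic (l : ℂ) (x : Fin 6 → ℂ) : ℂ :=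
  x 0 ^ 3 + x 1 ^ 3 + x 2 ^ 3 - 3 * l * x 3 * x 4 * x 5

/-- The second cubic form defining the (3,3) pencil `X_λ`. -/
def Gcubic (l : ℂ) (x : Fin 6 → ℂ) : ℂ :=
  x 3 ^ 3 + x 4 ^ 3 + x 5 ^ 3 - 3 * l * x 0 * x 1 * x 2

/-- The plane `W(a,b,c,p) ⊆ ℂ⁶`, spanned by `(1,−1,0,p,−p,0)` and `(a,a,b,c,c,1)`. -/
def linePlane (a b c p : ℂ) : Submodule ℂ (Fin 6 → ℂ) :=
  Submodule.span ℂ {![1, -1, 0, p, -p, 0], ![a, a, b, c, c, 1]}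

/-- The system of equations characterizing the 36 lines of Lemma 2.3. -/
def lineEqs (l a b c p : ℂ) : Prop :=
  l * p ^ 2 = -2 * a ∧ l ^ 2 * b = 4 * a * c ∧
    12 * c * a ^ 3 = (2 * c ^ 3 + 1) * l ∧
    64 * c ^ 6 - (16 * l ^ 6 - 32) * c ^ 3 + l ^ 6 = 0

/-- The subgroup `G ≤ (ℂˣ)⁶` generated by `α₁, α₂, α₃`, where `ω = ζ³`. -/
def Gsub (z : ℂˣ) : Subgroup (Fin 6 → ℂˣ) :=
  Subgroup.closure
    {![1, z ^ 3, (z ^ 3)⁻¹, 1, 1, 1],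
      ![1, 1, z ^ 3, z, z, (z ^ 2)⁻¹],
      ![1, 1, 1, 1, z ^ 3, (z ^ 3)⁻¹]}

/-- The subgroup `H ≤ S₆` generated by all permutations of the indices `{0,1,2}`
and all permutations of the indices `{3,4,5}`. -/
def Hsub : Subgroup (Equiv.Perm (Fin 6)) :=
  Subgroup.closure
    ({σ : Equiv.Perm (Fin 6) | ∀ i : Fin 6, 3 ≤ (i : ℕ) → σ i = i} ∪
      {σ : Equiv.Perm (Fin 6) | ∀ i : Fin 6, (i : ℕ) < 3 → σ i = i})

/-- Componentwise multiplication by `g ∈ (ℂˣ)⁶` as a linear automorphism-inducing map. -/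
def diagMap (g : Fin 6 → ℂˣ) : (Fin 6 → ℂ) →ₗ[ℂ] (Fin 6 → ℂ) :=
  LinearMap.pi fun i => (g i : ℂ) • LinearMap.proj i

/-- Coordinate permutation `x ↦ x ∘ σ` as a linear map. -/
def permMap (σ : Equiv.Perm (Fin 6)) : (Fin 6 → ℂ) →ₗ[ℂ] (Fin 6 → ℂ) :=
  LinearMap.funLeft ℂ ℂ σ

lemma cv0 {α : Type*} (x0 x1 x2 x3 x4 x5 : α) : ![x0,x1,x2,x3,x4,x5] (0:Fin 6) = x0 := rfl
lemma cv1 {α : Type*} (x0 x1 x2 x3 x4 x5 : α) : ![x0,x1,x2,x3,x4,x5] (1:Fin 6) = x1 := rfl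
lemma cv2 {α : Type*} (x0 x1 x2 x3 x4 x5 : α) : ![x0,x1,x2,x3,x4,x5] (2:Fin 6) = x2 := rfl
lemma cv3 {α : Type*} (x0 x1 x2 x3 x4 x5 : α) : ![x0,x1,x2,x3,x4,x5] (3:Fin 6) = x3 := rfl
lemma cv4 {α : Type*} (x0 x1 x2 x3 x4 x5 : α) : ![x0,x1,x2,x3,x4,x5] (4:Fin 6) = x4 := rfl
lemma cv5 {α : Type*} (x0 x1 x2 x3 x4 x5 : α) : ![x0,x1,x2,x3,x4,x5] (5:Fin 6) = x5 := rfl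

lemma Gsub_prop (z : ℂˣ) (hz : IsPrimitiveRoot (z : ℂ) 9) {g : Fin 6 → ℂˣ} (hg : g ∈ Gsub z) :
    (g 0 : ℂ) = 1 ∧ (∀ i, (g i : ℂ) ^ 9 = 1) ∧
      (g 1 : ℂ) * (g 2 : ℂ) = (g 3 : ℂ) ^ 3 ∧ (g 3 : ℂ) * (g 4 : ℂ) * (g 5 : ℂ) = 1 := by
  have hz9 : (z : ℂ) ^ 9 = 1 := hz.pow_eq_one
  have hz0 : (z : ℂ) ≠ 0 := z.ne_zero
  have hz39 : ((z : ℂ) ^ 3) ^ 9 = 1 := by rw [← pow_mul, mul_comm, pow_mul, hz9, one_pow]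
  have hz29 : ((z : ℂ) ^ 2) ^ 9 = 1 := by rw [← pow_mul, mul_comm, pow_mul, hz9, one_pow]
  induction hg using Subgroup.closure_induction with
  | mem x hx =>
      rcases hx with rfl | rfl | rfl
      · refine ⟨by simp [cv0], ?_, ?_, ?_⟩
        · intro i
          fin_cases i <;>
            simp [cv0, cv1, cv2, cv3, cv4, cv5, inv_pow, hz39]
        · simp [cv1, cv2, cv3]
        · simp [cv3, cv4, cv5]
      · refine ⟨by simp [cv0], ?_, ?_, ?_⟩
        · intro i
          fin_cases i <;>
            simp [cv0, cv1, cv2, cv3, cv4, cv5, inv_pow, hz39, hz29, hz9]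
        · simp [cv1, cv2, cv3]
        · simp only [cv3, cv4, cv5]
          field_simp
          rw [Units.val_inv_eq_inv_val, Units.val_pow_eq_pow_val, mul_inv_cancel₀ (pow_ne_zero 2 hz0)]
      · refine ⟨by simp [cv0], ?_, ?_, ?_⟩
        · intro i
          fin_cases i <;>
            simp [cv0, cv1, cv2, cv3, cv4, cv5, inv_pow, hz39]
        · simp [cv1, cv2, cv3]
        · simp [cv3, cv4, cv5]
  | one => simp
  | mul x y hx hy ihx ihy =>
      obtain ⟨hx0, hx9, hx12, hx345⟩ := ihx
      obtain ⟨hy0, hy9, hy12, hy345⟩ := ihy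
      refine ⟨?_, ?_, ?_, ?_⟩
      · simp only [Pi.mul_apply, Units.val_mul, hx0, hy0, one_mul]
      · intro i
        simp only [Pi.mul_apply, Units.val_mul, mul_pow, hx9 i, hy9 i, one_mul]
      · simp only [Pi.mul_apply, Units.val_mul]
        linear_combination (y 1 : ℂ) * (y 2 : ℂ) * hx12 + ((x 3 : ℂ))^3 * hy12
      · simp only [Pi.mul_apply, Units.val_mul]
        linear_combination (y 3 : ℂ) * (y 4 : ℂ) * (y 5 : ℂ) * hx345 + hy345
  | inv x hx ihx =>
      obtain ⟨hx0, hx9, hx12, hx345⟩ := ihx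
      refine ⟨?_, ?_, ?_, ?_⟩
      · simp only [Pi.inv_apply, Units.val_inv_eq_inv_val, hx0, inv_one]
      · intro i
        simp only [Pi.inv_apply, Units.val_inv_eq_inv_val, inv_pow, hx9 i, inv_one]
      · simp only [Pi.inv_apply, Units.val_inv_eq_inv_val]
        rw [← mul_inv, inv_pow, hx12]
      · simp only [Pi.inv_apply, Units.val_inv_eq_inv_val]
        rw [← mul_inv, ← mul_inv, hx345, inv_one]

lemma Hsub_prop {σ : Equiv.Perm (Fin 6)} (hσ : σ ∈ Hsub) :
    ∀ i : Fin 6, ((σ i : Fin 6) : ℕ) < 3 ↔ (i : ℕ) < 3 := by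
  induction hσ using Subgroup.closure_induction with
  | mem x hx =>
      intro i
      rcases hx with h | h
      · constructor
        · intro hlt
          by_contra hge
          rw [h i (by omega)] at hlt
          omega
        · intro hlt
          by_contra hge
          have h2 := x.injective (h (x i) (by omega))
          rw [h2] at hge
          omega
      · constructor
        · intro hlt
          have h3 := x.injective (h (x i) hlt)
          rw [← h3]; exact hlt
        · intro hlt
          rw [h i hlt]; exact hlt
  | one => simp
  | mul x y hx hy ihx ihy =>
      intro i
      rw [Equiv.Perm.mul_apply]
      exact (ihx (y i)).trans (ihy i)
  | inv x hx ihx =>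
      intro i
      have h := ihx (x⁻¹ i)
      rw [show x (x⁻¹ i) = i from x.apply_symm_apply i] at h
      exact h.symm

theorem stmt_7 (z : ℂˣ) (hz : IsPrimitiveRoot (z : ℂ) 9) :
    ∃ S : Finset ℂ, (0 : ℂ) ∈ S ∧ ∀ l : ℂ, l ∉ S →
      ∀ a b c p : ℂ, c ≠ 0 → lineEqs l a b c p →
        ∀ g ∈ Gsub z, ∀ σ ∈ Hsub,
          Submodule.map (diagMap g) (Submodule.map (permMap σ) (linePlane a b c p)) =
              linePlane a b c p →
            Submodule.map (diagMap g) (linePlane a b c p) = linePlane a b c p ∧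
            Submodule.map (permMap σ) (linePlane a b c p) = linePlane a b c p := by
  classical
  refine ⟨insert (0 : ℂ) ((Polynomial.nthRoots 6 (1 : ℂ)).toFinset),
    Finset.mem_insert_self _ _, ?_⟩
  intro l hl a b c p hc hle g hg σ hσ hmap
  have hl0 : l ≠ 0 := fun h => hl (by simp [h])
  have hl6 : l ^ 6 ≠ 1 := by
    intro h
    exact hl (Finset.mem_insert_of_mem
      (Multiset.mem_toFinset.mpr ((Polynomial.mem_nthRoots (by norm_num)).mpr h)))
  obtain ⟨hg0, hg9, hg12, hg345⟩ := Gsub_prop z hz hg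
  have hB := Hsub_prop hσ
  obtain ⟨h1, h2, h3, h4⟩ := hle
  -- nonvanishing
  have ha : a ≠ 0 := by
    intro h; subst h
    have hc3 : 2 * c ^ 3 + 1 = 0 := by
      have h' : (2 * c ^ 3 + 1) * l = 0 := by linear_combination -h3
      rcases mul_eq_zero.mp h' with h'' | h''
      · exact h''
      · exact absurd h'' hl0
    have hl60 : l ^ 6 = 0 := by
      linear_combination (1/9) * h4 - ((32 * c ^ 3 - 8 * l ^ 6)/9) * hc3
    exact hl0 (pow_eq_zero_iff (by norm_num) |>.mp hl60)
  have hp : p ≠ 0 := by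
    intro h; subst h; apply ha; linear_combination (1/2) * h1
  have hb : b ≠ 0 := by
    intro h; subst h
    have h' : 4 * a * c = 0 := by linear_combination -h2
    rcases mul_eq_zero.mp h' with h'' | h''
    · rcases mul_eq_zero.mp h'' with h3' | h3'
      · norm_num at h3'
      · exact ha h3'
    · exact hc h''
  have hapc : (a * p) ^ 2 ≠ c ^ 2 := by
    intro heq
    have hc8 : 8 * c ^ 3 + 1 = 0 := by
      have h0 : l * (8 * c ^ 3 + 1) = 0 := by
        linear_combination (-1) * h3 - 6 * c * l * heq + 6 * c * a ^ 2 * h1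
      rcases mul_eq_zero.mp h0 with h' | h'
      · exact absurd h' hl0
      · exact h'
    apply hl6
    linear_combination (1/3) * h4 + ((-8 * c ^ 3 + 2 * l ^ 6 - 3)/3) * hc8
  -- membership of image of u
  have huW : (![1, -1, 0, p, -p, 0] : Fin 6 → ℂ) ∈ linePlane a b c p :=
    Submodule.subset_span (Set.mem_insert _ _)
  have hTu : diagMap g (permMap σ ![1, -1, 0, p, -p, 0]) ∈ linePlane a b c p := by
    rw [← hmap]
    exact Submodule.mem_map_of_mem (Submodule.mem_map_of_mem huW)
  unfold linePlane at hTu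
  obtain ⟨s, t, hst⟩ := Submodule.mem_span_pair.mp hTu
  have E : ∀ i : Fin 6,
      s * (![1, -1, 0, p, -p, 0] : Fin 6 → ℂ) i + t * (![a, a, b, c, c, 1] : Fin 6 → ℂ) i =
        (g i : ℂ) * (![1, -1, 0, p, -p, 0] : Fin 6 → ℂ) (σ i) := by
    intro i
    have h := congrFun hst i
    simp only [Pi.add_apply, Pi.smul_apply, smul_eq_mul, diagMap, permMap,
      LinearMap.pi_apply, LinearMap.smul_apply, LinearMap.proj_apply,
      LinearMap.funLeft_apply] at h
    exact h
  have hval : ∀ i : Fin 6, (σ i).val < 6 := fun i => (σ i).isLt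
  have inj : ∀ i j : Fin 6, i ≠ j → (σ i).val ≠ (σ j).val := by
    intro i j hij h
    exact hij (σ.injective (Fin.ext h))
  -- Step A: σ 2 = 2
  have hσ2 : σ 2 = 2 := by
    by_contra hne
    have h2v : (σ 2).val = 0 ∨ (σ 2).val = 1 := by
      have hlt : (σ 2).val < 3 := (hB 2).mpr (by decide)
      have hne2 : (σ 2).val ≠ 2 := fun h => hne (Fin.ext h)
      omega
    have hT : t ≠ 0 := by
      rcases h2v with h | h
      · have e2 := E 2
        rw [show σ 2 = 0 from Fin.ext h] at e2
        simp only [cv0, cv2] at e2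
        intro ht0; rw [ht0] at e2
        exact (g 2).ne_zero (by linear_combination -e2)
      · have e2 := E 2
        rw [show σ 2 = 1 from Fin.ext h] at e2
        simp only [cv1, cv2] at e2
        intro ht0; rw [ht0] at e2
        exact (g 2).ne_zero (by linear_combination e2)
    have h01 : (σ 0).val = 2 ∨ (σ 1).val = 2 := by
      have l0 : (σ 0).val < 3 := (hB 0).mpr (by decide)
      have l1 : (σ 1).val < 3 := (hB 1).mpr (by decide)
      have n01 := inj 0 1 (by decide)
      have n02 := inj 0 2 (by decide)
      have n12 := inj 1 2 (by decide)
      omega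
    have hs : s = t * a ∨ s = -(t * a) := by
      rcases h01 with h | h
      · right
        have e0 := E 0
        rw [show σ 0 = 2 from Fin.ext h] at e0
        simp only [cv0, cv2] at e0
        linear_combination e0
      · left
        have e1 := E 1
        rw [show σ 1 = 2 from Fin.ext h] at e1
        simp only [cv1, cv2] at e1
        linear_combination -e1
    have hσ5ne : (σ 5).val ≠ 5 := by
      intro h
      have e5 := E 5
      rw [show σ 5 = 5 from Fin.ext h] at e5
      simp only [cv5] at e5
      exact hT (by linear_combination e5)
    have h34 : (σ 3).val = 5 ∨ (σ 4).val = 5 := by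
      have f3 : ¬ (σ 3).val < 3 := fun h => absurd ((hB 3).mp h) (by decide)
      have f4 : ¬ (σ 4).val < 3 := fun h => absurd ((hB 4).mp h) (by decide)
      have f5 : ¬ (σ 5).val < 3 := fun h => absurd ((hB 5).mp h) (by decide)
      have n34 := inj 3 4 (by decide)
      have n35 := inj 3 5 (by decide)
      have n45 := inj 4 5 (by decide)
      have := hval 3; have := hval 4; have := hval 5
      omega
    have hsp : s * p = t * c ∨ s * p = -(t * c) := by
      rcases h34 with h | h
      · right
        have e3 := E 3
        rw [show σ 3 = 5 from Fin.ext h] at e3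
        simp only [cv3, cv5] at e3
        linear_combination e3
      · left
        have e4 := E 4
        rw [show σ 4 = 5 from Fin.ext h] at e4
        simp only [cv4, cv5] at e4
        linear_combination -e4
    have hsq : s ^ 2 = (t * a) ^ 2 := by
      rcases hs with h | h
      · linear_combination (s + t * a) * h
      · linear_combination (s - t * a) * h
    have hsp2 : (s * p) ^ 2 = (t * c) ^ 2 := by
      rcases hsp with h | h
      · linear_combination (s * p + t * c) * h
      · linear_combination (s * p - t * c) * h
    have h0 : t ^ 2 * ((a * p) ^ 2 - c ^ 2) = 0 := by
      linear_combination (-(p ^ 2)) * hsq + hsp2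
    rcases mul_eq_zero.mp h0 with h' | h'
    · exact absurd h' (pow_ne_zero 2 hT)
    · exact hapc (by linear_combination h')
  -- Step B: t = 0
  have ht0 : t = 0 := by
    have e2 := E 2
    rw [hσ2] at e2
    simp only [cv2] at e2
    have h' : t * b = 0 := by linear_combination e2
    rcases mul_eq_zero.mp h' with h'' | h''
    · exact h''
    · exact absurd h'' hb
  -- Step C: σ 5 = 5
  have hσ5 : σ 5 = 5 := by
    have hge : ¬ (σ 5).val < 3 := fun h => absurd ((hB 5).mp h) (by decide)
    have h5 : (σ 5).val = 3 ∨ (σ 5).val = 4 ∨ (σ 5).val = 5 := by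
      have := hval 5; omega
    rcases h5 with h | h | h
    · exfalso
      have e5 := E 5
      rw [show σ 5 = 3 from Fin.ext h, ht0] at e5
      simp only [cv3, cv5] at e5
      have h' : (g 5 : ℂ) * p = 0 := by linear_combination -e5
      rcases mul_eq_zero.mp h' with h'' | h''
      · exact (g 5).ne_zero h''
      · exact hp h''
    · exfalso
      have e5 := E 5
      rw [show σ 5 = 4 from Fin.ext h, ht0] at e5
      simp only [cv4, cv5] at e5
      have h' : (g 5 : ℂ) * p = 0 := by linear_combination e5
      rcases mul_eq_zero.mp h' with h'' | h''
      · exact (g 5).ne_zero h''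
      · exact hp h''
    · exact Fin.ext h
  -- Step D
  have hσ2v : (σ 2).val = 2 := by rw [hσ2]; rfl
  have hσ5v : (σ 5).val = 5 := by rw [hσ5]; rfl
  have h01 : ((σ 0).val = 0 ∧ (σ 1).val = 1) ∨ ((σ 0).val = 1 ∧ (σ 1).val = 0) := by
    have l0 : (σ 0).val < 3 := (hB 0).mpr (by decide)
    have l1 : (σ 1).val < 3 := (hB 1).mpr (by decide)
    have n01 := inj 0 1 (by decide)
    have n02 := inj 0 2 (by decide)
    have n12 := inj 1 2 (by decide)
    omega
  have hg1s : (g 1 : ℂ) = 1 ∧ s ^ 2 = 1 := by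
    rcases h01 with ⟨h0, h1'⟩ | ⟨h0, h1'⟩
    · have e0 := E 0
      rw [show σ 0 = 0 from Fin.ext h0, ht0, hg0] at e0
      simp only [cv0] at e0
      have hs1 : s = 1 := by linear_combination e0
      have e1 := E 1
      rw [show σ 1 = 1 from Fin.ext h1', ht0] at e1
      simp only [cv1] at e1
      exact ⟨by linear_combination e1 + hs1, by rw [hs1]; ring⟩
    · have e0 := E 0
      rw [show σ 0 = 1 from Fin.ext h0, ht0, hg0] at e0
      simp only [cv0, cv1] at e0
      have hs1 : s = -1 := by linear_combination e0
      have e1 := E 1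
      rw [show σ 1 = 0 from Fin.ext h1', ht0] at e1
      simp only [cv0, cv1] at e1
      refine ⟨?_, by rw [hs1]; ring⟩
      rw [hs1] at e1
      linear_combination -e1
  have h34 : ((σ 3).val = 3 ∧ (σ 4).val = 4) ∨ ((σ 3).val = 4 ∧ (σ 4).val = 3) := by
    have f3 : ¬ (σ 3).val < 3 := fun h => absurd ((hB 3).mp h) (by decide)
    have f4 : ¬ (σ 4).val < 3 := fun h => absurd ((hB 4).mp h) (by decide)
    have n34 := inj 3 4 (by decide)
    have n35 := inj 3 5 (by decide)
    have n45 := inj 4 5 (by decide)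
    have := hval 3; have := hval 4
    omega
  have hg34 : (g 3 : ℂ) = (g 4 : ℂ) ∧ (g 3 : ℂ) ^ 2 = s ^ 2 := by
    rcases h34 with ⟨h3', h4'⟩ | ⟨h3', h4'⟩
    · have e3 := E 3
      rw [show σ 3 = 3 from Fin.ext h3', ht0] at e3
      simp only [cv3] at e3
      have hg3 : (g 3 : ℂ) = s := by
        have h' : ((g 3 : ℂ) - s) * p = 0 := by linear_combination -e3
        rcases mul_eq_zero.mp h' with h'' | h''
        · linear_combination h''
        · exact absurd h'' hp
      have e4 := E 4
      rw [show σ 4 = 4 from Fin.ext h4', ht0] at e4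
      simp only [cv4] at e4
      have hg4 : (g 4 : ℂ) = s := by
        have h' : ((g 4 : ℂ) - s) * p = 0 := by linear_combination e4
        rcases mul_eq_zero.mp h' with h'' | h''
        · linear_combination h''
        · exact absurd h'' hp
      exact ⟨hg3.trans hg4.symm, by rw [hg3]⟩
    · have e3 := E 3
      rw [show σ 3 = 4 from Fin.ext h3', ht0] at e3
      simp only [cv3, cv4] at e3
      have hg3 : (g 3 : ℂ) = -s := by
        have h' : ((g 3 : ℂ) + s) * p = 0 := by linear_combination e3
        rcases mul_eq_zero.mp h' with h'' | h''
        · linear_combination h''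
        · exact absurd h'' hp
      have e4 := E 4
      rw [show σ 4 = 3 from Fin.ext h4', ht0] at e4
      simp only [cv3, cv4] at e4
      have hg4 : (g 4 : ℂ) = -s := by
        have h' : ((g 4 : ℂ) + s) * p = 0 := by linear_combination -e4
        rcases mul_eq_zero.mp h' with h'' | h''
        · linear_combination h''
        · exact absurd h'' hp
      exact ⟨hg3.trans hg4.symm, by rw [hg3]; ring⟩
  have hg3sq : (g 3 : ℂ) ^ 2 = 1 := hg34.2.trans hg1s.2
  have hg3 : (g 3 : ℂ) = 1 := by
    have h9 := hg9 3
    calc (g 3 : ℂ) = ((g 3 : ℂ) ^ 2) ^ 4 * (g 3 : ℂ) := by rw [hg3sq]; ring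
    _ = (g 3 : ℂ) ^ 9 := by ring
    _ = 1 := h9
  have hg4 : (g 4 : ℂ) = 1 := hg34.1 ▸ hg3
  have hg1 : (g 1 : ℂ) = 1 := hg1s.1
  have hg2 : (g 2 : ℂ) = 1 := by
    rw [hg1, hg3] at hg12
    linear_combination hg12
  have hg5 : (g 5 : ℂ) = 1 := by
    rw [hg3, hg4] at hg345
    linear_combination hg345
  have hdiag : diagMap g = LinearMap.id := by
    apply LinearMap.ext; intro x; funext i
    have hgi : (g i : ℂ) = 1 := by fin_cases i <;> assumption
    simp [diagMap, hgi]
  constructor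
  · rw [hdiag, Submodule.map_id]
  · rwa [hdiag, Submodule.map_id] at hmap
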